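/- Let F(w) = −(1 + 4w + 6w² + w⁴)/((w + 1)·(1 + w²)²). Then (2π)²/(3.3957·(1 − 0.4862)) · exp(∫_{0.4862}^{1} (−F(w)) dw) ≤ (7.515)². -/

import Mathlib

open Real intervalIntegral

/-- With `F w = −(1 + 4w + 6w² + w⁴)/((w + 1)(1 + w²)²)`, the threshold
`(2π)²/(3.3957 (1 − 0.4862)) · exp (∫_{0.4862}^{1} (−F w) dw)` is at most `7.515²`. -/
theorem stmt_18 (F : ℝ → ℝ)
    (hF : ∀ w, F w = -(1 + 4 * w + 6 * w ^ 2 + w ^ 4) / ((w + 1) * (1 + w ^ 2) ^ 2)) :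
    (2 * Real.pi) ^ 2 / (3.3957 * (1 - 0.4862)) *
      Real.exp (∫ w in (0.4862 : ℝ)..1, -F w) ≤ 7.515 ^ 2 := by
  set t : ℝ := 2 / (1 + (0.4862 : ℝ) ^ 2) - 1 with ht
  have hInt : (∫ w in (0.4862 : ℝ)..1, -F w)
      = Real.log 2 - Real.log 1.4862 + t := by
    have hderiv : ∀ w ∈ Set.uIcc (0.4862 : ℝ) 1,
        HasDerivAt (fun w : ℝ => Real.log (w + 1) - 2 / (1 + w ^ 2)) (-F w) w := by
      intro w hw
      rw [Set.uIcc_of_le (by norm_num)] at hw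
      have hw1 : (0.4862 : ℝ) ≤ w := hw.1
      have hwpos : (0 : ℝ) < w + 1 := by linarith
      have hq : (1 : ℝ) + w ^ 2 ≠ 0 := by positivity
      have h1 : HasDerivAt (fun w : ℝ => Real.log (w + 1)) (1 / (w + 1)) w := by
        have := (Real.hasDerivAt_log hwpos.ne').comp w
          ((hasDerivAt_id w).add_const 1)
        refine this.congr_deriv ?_
        simp
      have h2 : HasDerivAt (fun w : ℝ => 2 / (1 + w ^ 2))
          (-(2 * (2 * w)) / (1 + w ^ 2) ^ 2) w := by
        have hd : HasDerivAt (fun w : ℝ => 1 + w ^ 2) (2 * w) w := by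
          simpa using ((hasDerivAt_pow 2 w).const_add 1)
        refine ((hasDerivAt_const w (2 : ℝ)).div hd hq).congr_deriv ?_
        simp
      have := h1.sub h2
      refine this.congr_deriv ?_
      rw [hF w]
      field_simp
      ring
    have hcont : IntervalIntegrable (fun w => -F w) MeasureTheory.volume 0.4862 1 := by
      apply ContinuousOn.intervalIntegrable
      have : ContinuousOn (fun w : ℝ =>
          -(-(1 + 4 * w + 6 * w ^ 2 + w ^ 4) / ((w + 1) * (1 + w ^ 2) ^ 2)))
          (Set.uIcc (0.4862 : ℝ) 1) := by
        apply ContinuousOn.neg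
        apply ContinuousOn.div (by fun_prop) (by fun_prop)
        intro w hw
        rw [Set.uIcc_of_le (by norm_num)] at hw
        have hw1 : (0.4862 : ℝ) ≤ w := hw.1
        have : (0 : ℝ) < w + 1 := by linarith
        positivity
      exact this.congr (fun w _ => by rw [hF w])
    rw [intervalIntegral.integral_eq_sub_of_hasDerivAt hderiv hcont]
    have h2 : (1 : ℝ) + 1 = 2 := by norm_num
    rw [ht]
    norm_num
    ring
  rw [hInt, Real.exp_add, Real.exp_sub, Real.exp_log (by norm_num : (0:ℝ) < 2),
    Real.exp_log (by norm_num : (0:ℝ) < 1.4862)]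
  have ht0 : (0 : ℝ) ≤ t := by rw [ht]; norm_num
  have ht1 : t ≤ 1 := by rw [ht]; norm_num
  have hexp : Real.exp t ≤ (∑ m ∈ Finset.range 7, t ^ m / m.factorial) +
      t ^ 7 * (7 + 1) / (Nat.factorial 7 * 7) :=
    Real.exp_bound' ht0 ht1 (by norm_num)
  have hsum : (∑ m ∈ Finset.range 7, t ^ m / m.factorial) +
      t ^ 7 * (7 + 1) / (Nat.factorial 7 * 7) ≤ 1.85449461 := by
    simp only [Finset.sum_range_succ, Finset.sum_range_zero]
    rw [ht]
    norm_num [Nat.factorial]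
  have hexp' : Real.exp t ≤ 1.85449461 := hexp.trans hsum
  have hpi : Real.pi < 3.141593 := Real.pi_lt_d6
  have hpi0 : 0 < Real.pi := Real.pi_pos
  have hepos : 0 < Real.exp t := Real.exp_pos t
  have key : (2 * Real.pi) ^ 2 * Real.exp t ≤ (2 * 3.141593) ^ 2 * 1.85449461 := by
    apply mul_le_mul (by nlinarith) hexp' hepos.le (by positivity)
  calc (2 * Real.pi) ^ 2 / (3.3957 * (1 - 0.4862)) * (2 / 1.4862 * Real.exp t)
      = ((2 * Real.pi) ^ 2 * Real.exp t) * (2 / (1.4862 * (3.3957 * (1 - 0.4862)))) := by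
        ring
    _ ≤ ((2 * 3.141593) ^ 2 * 1.85449461) * (2 / (1.4862 * (3.3957 * (1 - 0.4862)))) := by
        apply mul_le_mul_of_nonneg_right key (by norm_num)
    _ ≤ 7.515 ^ 2 := by norm_num
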